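/- Let ξ > 0 be fixed. Then lim_{z→0⁺} e^{−ξ²/(2z)} z^{1/2} Ψ₁[1, 1/2; 3/2, 1/2; −z, ξ²/(2z)] = (π/2) · erf(ξ/√2), where erf is the error function. -/

import Mathlib

open Complex MeasureTheory Filter Topology

noncomputable def poch (a : ℂ) (n : ℕ) : ℂ := (ascPochhammer ℂ n).eval a

lemma poch_zero (a : ℂ) : poch a 0 = 1 := by simp [poch]

lemma poch_succ (a : ℂ) (n : ℕ) : poch a (n + 1) = poch a n * (a + n) := by
  simp [poch, ascPochhammer_succ_right]

lemma poch_half_ne_zero (n : ℕ) : poch (1 / 2 : ℂ) n ≠ 0 := by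
  induction n with
  | zero => simp [poch_zero]
  | succ n ih =>
    rw [poch_succ]
    refine mul_ne_zero ih ?_
    have h : ((1 / 2 + n : ℝ) : ℂ) ≠ 0 := by
      rw [Complex.ofReal_ne_zero]; positivity
    intro hc
    apply h
    push_cast
    rw [← hc]

lemma poch_three_halves (n : ℕ) :
    poch (3 / 2 : ℂ) n = (2 * n + 1) * poch (1 / 2 : ℂ) n := by
  induction n with
  | zero => simp [poch_zero]
  | succ n ih =>
    rw [poch_succ, poch_succ, ih]
    push_cast
    ring

lemma poch_half_mul_fact (k : ℕ) :
    poch (1 / 2 : ℂ) k * (Nat.factorial k : ℂ) * 4 ^ k = ((2 * k).factorial : ℂ) := by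
  induction k with
  | zero => simp [poch_zero]
  | succ k ih =>
    rw [poch_succ]
    have h2 : 2 * (k + 1) = (2 * k + 1) + 1 := by ring
    rw [h2, Nat.factorial_succ, Nat.factorial_succ, Nat.factorial_succ]
    push_cast
    push_cast at ih
    linear_combination (4 * ((k : ℂ) + 1) * ((1 : ℂ) / 2 + k)) * ih

noncomputable def F11 (a c z : ℂ) : ℂ :=
  ∑' n : ℕ, poch a n / poch c n * z ^ n / (Nat.factorial n : ℂ)

noncomputable def F01 (b z : ℂ) : ℂ :=
  ∑' k : ℕ, z ^ k / (poch b k * (Nat.factorial k : ℂ))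

noncomputable def erf (t : ℝ) : ℝ :=
  2 / Real.sqrt Real.pi * ∫ s in (0 : ℝ)..t, Real.exp (-s ^ 2)

noncomputable def f11R (x : ℝ) : ℝ := ∫ t in (0:ℝ)..1, Real.exp (x * t ^ 2)

lemma integral_pow_Ioc (n : ℕ) : ∫ t in Set.Ioc (0:ℝ) 1, t ^ n = 1 / (n + 1) := by
  rw [← intervalIntegral.integral_of_le zero_le_one, integral_pow]
  norm_num

lemma exp_tsum (u : ℝ) : Real.exp u = ∑' n : ℕ, u ^ n / n.factorial := by
  rw [Real.exp_eq_exp_ℝ, NormedSpace.exp_eq_tsum_div]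

lemma tsum_eq_f11R (x : ℝ) :
    ∑' n : ℕ, x ^ n / ((2 * n + 1) * n.factorial) = f11R x := by
  have hint : ∀ (y : ℝ) (n : ℕ),
      ∫ t in Set.Ioc (0:ℝ) 1, (y * t ^ 2) ^ n / n.factorial
        = y ^ n / ((2 * n + 1) * n.factorial) := by
    intro y n
    have : ∀ t : ℝ, (y * t ^ 2) ^ n / n.factorial
        = (y ^ n / n.factorial) * t ^ (2 * n) := by
      intro t; rw [mul_pow, ← pow_mul]; ring
    simp_rw [this]
    rw [MeasureTheory.integral_const_mul, integral_pow_Ioc]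
    push_cast
    rw [div_mul_div_comm, mul_one, mul_comm (n.factorial : ℝ)]
  have hcont : ∀ n : ℕ, Continuous fun t : ℝ => (x * t ^ 2) ^ n / n.factorial := by
    intro n; continuity
  have hswap := MeasureTheory.integral_tsum_of_summable_integral_norm
    (F := fun (n : ℕ) (t : ℝ) => (x * t ^ 2) ^ n / n.factorial)
    (μ := volume.restrict (Set.Ioc (0:ℝ) 1))
    (fun n => (hcont n).integrableOn_Ioc) ?_
  · rw [f11R, intervalIntegral.integral_of_le zero_le_one]
    rw [show (∑' n : ℕ, x ^ n / ((2 * n + 1) * n.factorial : ℝ))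
        = ∑' n : ℕ, ∫ t in Set.Ioc (0:ℝ) 1, (x * t ^ 2) ^ n / n.factorial by
      exact tsum_congr fun n => (hint x n).symm]
    rw [hswap]
    apply MeasureTheory.setIntegral_congr_fun measurableSet_Ioc
    intro t _
    exact (exp_tsum (x * t ^ 2)).symm
  · -- summability of integrals of norms
    apply Summable.of_nonneg_of_le (fun n => MeasureTheory.integral_nonneg fun t => norm_nonneg _)
      (fun n => ?_) (Real.summable_pow_div_factorial |x|)
    have h1 : ∫ t in Set.Ioc (0:ℝ) 1, ‖(x * t ^ 2) ^ n / (n.factorial : ℝ)‖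
        = |x| ^ n / ((2 * n + 1) * n.factorial) := by
      rw [show (fun t : ℝ => ‖(x * t ^ 2) ^ n / (n.factorial : ℝ)‖)
          = fun t : ℝ => (|x| * |t| ^ 2) ^ n / n.factorial by
        funext t
        simp [Real.norm_eq_abs, abs_div, _root_.abs_pow, abs_mul, Nat.abs_cast, _root_.sq_abs]]
      rw [show (∫ t in Set.Ioc (0:ℝ) 1, (|x| * |t| ^ 2) ^ n / n.factorial)
          = ∫ t in Set.Ioc (0:ℝ) 1, (|x| * t ^ 2) ^ n / n.factorial by
        apply MeasureTheory.setIntegral_congr_fun measurableSet_Ioc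
        intro t ht
        dsimp only
        rw [abs_of_pos ht.1]]
      exact hint |x| n
    rw [h1]
    have hf : (0:ℝ) < n.factorial := by exact_mod_cast n.factorial_pos
    apply div_le_div_of_nonneg_left (by positivity) hf
    nlinarith [hf]

lemma F11_half (x : ℝ) : F11 (1 / 2) (3 / 2) (x : ℂ) = ((f11R x : ℝ) : ℂ) := by
  rw [F11, ← tsum_eq_f11R, Complex.ofReal_tsum]
  apply tsum_congr
  intro n
  rw [poch_three_halves]
  have h1 : poch (1 / 2 : ℂ) n ≠ 0 := poch_half_ne_zero n
  have h2 : ((2 * n + 1 : ℕ) : ℂ) ≠ 0 := Nat.cast_ne_zero.mpr (by omega)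
  have h3 : ((n.factorial : ℕ) : ℂ) ≠ 0 := Nat.cast_ne_zero.mpr n.factorial_pos.ne'
  push_cast at h2 ⊢
  field_simp

lemma F01_half {w : ℝ} (hw : 0 ≤ w) :
    F01 (1 / 2) (w : ℂ) = ((Real.cosh (2 * Real.sqrt w) : ℝ) : ℂ) := by
  rw [F01, Real.cosh_eq_tsum, Complex.ofReal_tsum]
  apply tsum_congr
  intro k
  have h1 : (2 * Real.sqrt w) ^ (2 * k) = 4 ^ k * w ^ k := by
    rw [pow_mul, mul_pow, Real.sq_sqrt hw]
    rw [← mul_pow]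
    norm_num
  rw [h1]
  have h2 : poch (1 / 2 : ℂ) k * (k.factorial : ℂ) ≠ 0 :=
    mul_ne_zero (poch_half_ne_zero k) (Nat.cast_ne_zero.mpr k.factorial_pos.ne')
  have h3 : ((2 * k).factorial : ℂ) ≠ 0 := Nat.cast_ne_zero.mpr (2 * k).factorial_pos.ne'
  have key := poch_half_mul_fact k
  push_cast
  rw [div_eq_div_iff h2 h3]
  push_cast at key
  linear_combination (-(w : ℂ) ^ k) * key

noncomputable def G (r : ℝ) : ℝ := ∫ s in (0:ℝ)..r, Real.exp (-s ^ 2)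

lemma cont_gauss : Continuous fun s : ℝ => Real.exp (-s ^ 2) := by continuity

lemma G_continuous : Continuous G :=
  intervalIntegral.continuous_primitive (fun a b => cont_gauss.intervalIntegrable a b) 0

lemma gauss_integrable : Integrable (fun s : ℝ => Real.exp (-s ^ 2)) := by
  have := integrable_exp_neg_mul_sq (b := 1) one_pos
  simpa using this

lemma G_nonneg {r : ℝ} (hr : 0 ≤ r) : 0 ≤ G r :=
  intervalIntegral.integral_nonneg hr fun s _ => (Real.exp_pos _).le

lemma G_le {r : ℝ} (hr : 0 ≤ r) : G r ≤ Real.sqrt Real.pi / 2 := by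
  have h1 : G r = ∫ s in Set.Ioc 0 r, Real.exp (-s ^ 2) :=
    intervalIntegral.integral_of_le hr
  have h2 : ∫ s in Set.Ioi (0:ℝ), Real.exp (-s ^ 2) = Real.sqrt Real.pi / 2 := by
    have := integral_gaussian_Ioi 1
    simpa using this
  rw [h1, ← h2]
  exact MeasureTheory.setIntegral_mono_set gauss_integrable.integrableOn
    (ae_of_all _ fun s => (Real.exp_pos _).le)
    (HasSubset.Subset.eventuallyLE Set.Ioc_subset_Ioi_self)

lemma G_neg (r : ℝ) : G (-r) = -G r := by
  have h := intervalIntegral.integral_comp_neg (a := (0:ℝ)) (b := -r)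
    (f := fun s => Real.exp (-s ^ 2))
  have h2 : (∫ x in (0:ℝ)..(-r), Real.exp (-(-x) ^ 2)) = G (-r) := by
    rw [show (fun x : ℝ => Real.exp (-(-x) ^ 2)) = fun x : ℝ => Real.exp (-x ^ 2) by
      funext x; ring_nf]
    rfl
  rw [h2] at h
  rw [h, neg_neg, neg_zero, intervalIntegral.integral_symm]
  rfl

lemma G_abs_le (r : ℝ) : |G r| ≤ Real.sqrt Real.pi / 2 := by
  rcases le_or_gt 0 r with h | h
  · rw [_root_.abs_of_nonneg (G_nonneg h)]; exact G_le h
  · have h1 : G r = -G (-r) := by rw [G_neg, neg_neg]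
    rw [h1, abs_neg, _root_.abs_of_nonneg (G_nonneg (by linarith))]
    exact G_le (by linarith)

lemma G_eq (r : ℝ) : r * f11R (-(r ^ 2)) = G r := by
  rw [f11R]
  have h : (fun t : ℝ => Real.exp (-(r ^ 2) * t ^ 2))
      = fun t : ℝ => Real.exp (-(t * r) ^ 2) := by funext t; ring_nf
  rw [h]
  have h2 := intervalIntegral.smul_integral_comp_mul_right
    (f := fun s : ℝ => Real.exp (-s ^ 2)) (a := (0:ℝ)) (b := 1) r
  simpa [G] using h2

noncomputable def Fz (c z s : ℝ) : ℝ :=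
  Set.indicator (Set.Ioi 0) G (Real.sqrt z * s + c) *
    (Real.exp (-s ^ 2) + Real.exp (-(s + 2 * c / Real.sqrt z) ^ 2))

lemma main_tendsto {c : ℝ} (hc : 0 < c) :
    Tendsto (fun z => ∫ s : ℝ, Fz c z s) (𝓝[>] (0:ℝ))
      (𝓝 (Real.sqrt Real.pi * G c)) := by
  have hlim_int : ∫ s : ℝ, G c * Real.exp (-s ^ 2) = Real.sqrt Real.pi * G c := by
    rw [MeasureTheory.integral_const_mul]
    have : ∫ s : ℝ, Real.exp (-s ^ 2) = Real.sqrt Real.pi := by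
      have := integral_gaussian 1
      simpa using this
    rw [this]; ring
  rw [← hlim_int]
  have hsqrt0 : Tendsto (fun z : ℝ => Real.sqrt z) (𝓝[>] 0) (𝓝 0) := by
    have := (Real.continuous_sqrt.tendsto 0).mono_left (nhdsWithin_le_nhds (s := Set.Ioi 0))
    simpa using this
  have hsqrt : Tendsto (fun z : ℝ => Real.sqrt z) (𝓝[>] 0) (𝓝[>] 0) := by
    rw [tendsto_nhdsWithin_iff]
    refine ⟨hsqrt0, ?_⟩
    filter_upwards [self_mem_nhdsWithin] with z hz
    exact Real.sqrt_pos.mpr hz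
  have hinv : Tendsto (fun z : ℝ => (Real.sqrt z)⁻¹) (𝓝[>] 0) atTop :=
    tendsto_inv_nhdsGT_zero.comp hsqrt
  apply MeasureTheory.tendsto_integral_filter_of_dominated_convergence
    (bound := fun s : ℝ => Real.sqrt Real.pi * Real.exp (-s ^ 2))
  · -- measurability
    apply Eventually.of_forall
    intro z
    apply Measurable.aestronglyMeasurable
    apply Measurable.mul
    · exact (G_continuous.measurable.indicator measurableSet_Ioi).comp
        ((measurable_const.mul measurable_id').add measurable_const)
    · exact ((cont_gauss).measurable).add
        (Continuous.measurable (by continuity))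
  · -- bound
    filter_upwards [self_mem_nhdsWithin] with z hz
    apply ae_of_all
    intro s
    have hz' : (0:ℝ) < z := hz
    have h0 : 0 < Real.sqrt z := Real.sqrt_pos.mpr hz'
    rw [Fz, Real.norm_eq_abs]
    by_cases hmem : Real.sqrt z * s + c ∈ Set.Ioi 0
    · rw [Set.indicator_of_mem hmem]
      have hd : 0 < 2 * c / Real.sqrt z := by positivity
      have hs : -(s + 2 * c / Real.sqrt z) ≤ s := by
        have h1 : 0 < Real.sqrt z * s + c := hmem
        have h2 : 2 * c / Real.sqrt z * Real.sqrt z = 2 * c :=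
          div_mul_cancel₀ _ h0.ne'
        nlinarith
      have hsq : s ^ 2 ≤ (s + 2 * c / Real.sqrt z) ^ 2 :=
        sq_le_sq' hs (by linarith)
      have hexp : Real.exp (-(s + 2 * c / Real.sqrt z) ^ 2) ≤ Real.exp (-s ^ 2) :=
        Real.exp_le_exp.mpr (by linarith)
      rw [abs_mul]
      have h1 : |Real.exp (-s ^ 2) + Real.exp (-(s + 2 * c / Real.sqrt z) ^ 2)|
          ≤ 2 * Real.exp (-s ^ 2) := by
        rw [abs_of_pos (by positivity)]
        linarith
      calc |G (Real.sqrt z * s + c)| * |Real.exp (-s ^ 2) + Real.exp (-(s + 2 * c / Real.sqrt z) ^ 2)|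
          ≤ (Real.sqrt Real.pi / 2) * (2 * Real.exp (-s ^ 2)) := by
            apply mul_le_mul (G_abs_le _) h1 (abs_nonneg _) (by positivity)
        _ = Real.sqrt Real.pi * Real.exp (-s ^ 2) := by ring
    · rw [Set.indicator_of_notMem hmem, zero_mul, abs_zero]
      positivity
  · -- bound integrable
    exact gauss_integrable.const_mul _
  · -- pointwise limit
    apply ae_of_all
    intro s
    have haff : Tendsto (fun z : ℝ => Real.sqrt z * s + c) (𝓝[>] 0) (𝓝 c) := by
      have := (hsqrt0.mul_const s).add_const c
      simpa using this
    have hG : Tendsto (fun z : ℝ => G (Real.sqrt z * s + c)) (𝓝[>] 0) (𝓝 (G c)) :=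
      (G_continuous.tendsto c).comp haff
    have hmem : ∀ᶠ z in 𝓝[>] (0:ℝ), Real.sqrt z * s + c ∈ Set.Ioi 0 :=
      haff.eventually (eventually_of_mem (Ioi_mem_nhds hc) fun y hy => hy)
    have h3 : Tendsto (fun z : ℝ => s + 2 * c / Real.sqrt z) (𝓝[>] 0) atTop := by
      apply tendsto_atTop_add_const_left
      have h4 := hinv.const_mul_atTop (show (0:ℝ) < 2 * c by positivity)
      refine h4.congr fun z => ?_
      rw [div_eq_mul_inv]
    have h5 : Tendsto (fun z : ℝ => Real.exp (-(s + 2 * c / Real.sqrt z) ^ 2))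
        (𝓝[>] 0) (𝓝 0) := by
      apply Real.tendsto_exp_atBot.comp
      apply (tendsto_neg_atTop_atBot).comp
      exact (tendsto_pow_atTop two_ne_zero).comp h3
    have hmul : Tendsto (fun z : ℝ =>
        G (Real.sqrt z * s + c) * (Real.exp (-s ^ 2) + Real.exp (-(s + 2 * c / Real.sqrt z) ^ 2)))
        (𝓝[>] 0) (𝓝 (G c * Real.exp (-s ^ 2))) := by
      have hadd : Tendsto (fun z : ℝ =>
          Real.exp (-s ^ 2) + Real.exp (-(s + 2 * c / Real.sqrt z) ^ 2))
          (𝓝[>] 0) (𝓝 (Real.exp (-s ^ 2) + 0)) :=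
        tendsto_const_nhds.add h5
      have := hG.mul hadd
      simpa using this
    apply hmul.congr'
    filter_upwards [hmem] with z hz
    rw [Fz, Set.indicator_of_mem hz]

noncomputable def Psi1 (a b c c' x y : ℂ) : ℂ :=
  (Complex.Gamma a)⁻¹ *
    ∫ u in Set.Ioi (0 : ℝ), (u : ℂ) ^ (a - 1) * Complex.exp (-(u : ℂ)) *
      F11 b c (x * u) * F01 c' (y * u)

noncomputable def phi (y z u : ℝ) : ℝ :=
  Real.exp (-u) * f11R (-(z * u)) * Real.cosh (2 * Real.sqrt (y * u))

noncomputable def Wf (c z r : ℝ) : ℝ :=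
  Set.indicator (Set.Ioi 0)
    (fun r => (Real.sqrt z)⁻¹ *
      (G r * (Real.exp (-((r - c) ^ 2 / z)) + Real.exp (-((r + c) ^ 2 / z))))) r

lemma step1 {y z : ℝ} (hy : 0 ≤ y) (hz : 0 < z) :
    Psi1 1 (1 / 2) (3 / 2) (1 / 2) (-(z : ℂ)) ((y : ℝ) : ℂ)
      = ((∫ u in Set.Ioi (0:ℝ), phi y z u : ℝ) : ℂ) := by
  rw [Psi1, Complex.Gamma_one, inv_one, one_mul]
  have hcongr : ∀ u ∈ Set.Ioi (0:ℝ),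
      (u : ℂ) ^ ((1:ℂ) - 1) * Complex.exp (-(u : ℂ)) *
        F11 (1/2) (3/2) (-(z:ℂ) * u) * F01 (1/2) ((y:ℂ) * u)
      = ((phi y z u : ℝ) : ℂ) := by
    intro u hu
    have hu0 : (0:ℝ) ≤ u := (le_of_lt hu)
    rw [show ((1:ℂ) - 1) = 0 by ring, Complex.cpow_zero, one_mul]
    rw [show (-(z:ℂ) * u) = ((-(z * u) : ℝ) : ℂ) by push_cast; ring]
    rw [show ((y:ℂ) * u) = (((y * u) : ℝ) : ℂ) by push_cast; ring]
    rw [F11_half, F01_half (by positivity)]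
    rw [show (-(u:ℂ)) = ((-u : ℝ) : ℂ) by push_cast; ring, ← Complex.ofReal_exp]
    simp only [phi]
    push_cast
    ring
  rw [MeasureTheory.setIntegral_congr_fun measurableSet_Ioi hcongr]
  exact integral_ofReal

lemma step2 {ξ z : ℝ} (hξ : 0 < ξ) (hz : 0 < z) :
    Real.exp (-(ξ ^ 2 / (2 * z))) * Real.sqrt z *
        ∫ u in Set.Ioi (0:ℝ), phi (ξ ^ 2 / (2 * z)) z u
      = ∫ r : ℝ, Wf (ξ / Real.sqrt 2) z r := by
  set y : ℝ := ξ ^ 2 / (2 * z) with hy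
  set c : ℝ := ξ / Real.sqrt 2 with hcdef
  have h0 : 0 < Real.sqrt z := Real.sqrt_pos.mpr hz
  have hsz : Real.sqrt z ^ 2 = z := Real.sq_sqrt hz.le
  have hc : 0 < c := by
    apply div_pos hξ
    exact Real.sqrt_pos.mpr (by norm_num)
  have hc2 : c ^ 2 = ξ ^ 2 / 2 := by
    rw [hcdef, div_pow, Real.sq_sqrt (by norm_num : (0:ℝ) ≤ 2)]
  have hyc : y = c ^ 2 / z := by rw [hy, hc2]; ring
  -- substitution u = x ^ 2
  have h2a : (∫ u in Set.Ioi (0:ℝ), phi y z u)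
      = ∫ x in Set.Ioi (0:ℝ), (2 * x) * phi y z (x ^ 2) := by
    rw [← MeasureTheory.integral_comp_rpow_Ioi_of_pos (g := phi y z) (p := 2) two_pos]
    apply MeasureTheory.setIntegral_congr_fun measurableSet_Ioi
    intro x hx
    have hxx : x ^ (2:ℝ) = x ^ (2:ℕ) := by
      rw [← Real.rpow_natCast x 2]; norm_num
    dsimp only
    rw [show (2:ℝ) - 1 = 1 by norm_num, Real.rpow_one, smul_eq_mul, hxx]
  -- substitution x = r / sqrt z
  have h2b : (∫ x in Set.Ioi (0:ℝ), (2 * x) * phi y z (x ^ 2))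
      = (Real.sqrt z)⁻¹ • ∫ r in Set.Ioi (0:ℝ),
          (2 * ((Real.sqrt z)⁻¹ * r)) * phi y z (((Real.sqrt z)⁻¹ * r) ^ 2) := by
    have h := MeasureTheory.integral_comp_mul_left_Ioi
      (fun x => (2 * x) * phi y z (x ^ 2)) 0 (inv_pos.mpr h0)
    rw [mul_zero] at h
    rw [h, inv_inv, smul_smul, inv_mul_cancel₀ h0.ne', one_smul]
  rw [h2a, h2b, smul_eq_mul]
  rw [show Real.exp (-y) * Real.sqrt z * ((Real.sqrt z)⁻¹ * ∫ r in Set.Ioi (0:ℝ),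
        (2 * ((Real.sqrt z)⁻¹ * r)) * phi y z (((Real.sqrt z)⁻¹ * r) ^ 2))
      = Real.exp (-y) * (∫ r in Set.Ioi (0:ℝ),
        (2 * ((Real.sqrt z)⁻¹ * r)) * phi y z (((Real.sqrt z)⁻¹ * r) ^ 2)) by
    rw [mul_assoc, ← mul_assoc (Real.sqrt z), mul_inv_cancel₀ h0.ne', one_mul]]
  rw [← MeasureTheory.integral_const_mul]
  have hW : (∫ r : ℝ, Wf c z r) = ∫ r in Set.Ioi (0:ℝ),
      (Real.sqrt z)⁻¹ * (G r * (Real.exp (-((r - c) ^ 2 / z)) +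
        Real.exp (-((r + c) ^ 2 / z)))) := by
    simp only [Wf]
    exact MeasureTheory.integral_indicator measurableSet_Ioi
  rw [hW]
  apply MeasureTheory.setIntegral_congr_fun measurableSet_Ioi
  intro r hr
  have hr0 : (0:ℝ) < r := hr
  have hx2 : ((Real.sqrt z)⁻¹ * r) ^ 2 = r ^ 2 / z := by
    rw [mul_pow, inv_pow, hsz]; ring
  have hzr : z * (r ^ 2 / z) = r ^ 2 := by field_simp
  have hyr : y * (r ^ 2 / z) = (c * r / z) ^ 2 := by
    rw [hyc]; field_simp
  have hsqrt_yr : Real.sqrt (y * (r ^ 2 / z)) = c * r / z := by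
    rw [hyr, Real.sqrt_sq (by positivity)]
  dsimp only
  simp only [phi]
  rw [hx2, hzr, hsqrt_yr, Real.cosh_eq]
  have hexp1 : Real.exp (-y) * Real.exp (-(r ^ 2 / z)) * Real.exp (2 * (c * r / z))
      = Real.exp (-((r - c) ^ 2 / z)) := by
    rw [← Real.exp_add, ← Real.exp_add]
    congr 1
    rw [hyc]
    field_simp
    ring
  have hexp2 : Real.exp (-y) * Real.exp (-(r ^ 2 / z)) * Real.exp (-(2 * (c * r / z)))
      = Real.exp (-((r + c) ^ 2 / z)) := by
    rw [← Real.exp_add, ← Real.exp_add]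
    congr 1
    rw [hyc]
    field_simp
    ring
  have hG : r * f11R (-(r ^ 2)) = G r := G_eq r
  linear_combination ((Real.sqrt z)⁻¹ * r * f11R (-(r ^ 2))) * hexp1
    + ((Real.sqrt z)⁻¹ * r * f11R (-(r ^ 2))) * hexp2
    + ((Real.sqrt z)⁻¹ * (Real.exp (-((r - c) ^ 2 / z))
        + Real.exp (-((r + c) ^ 2 / z)))) * hG

lemma step3 {c z : ℝ} (hc : 0 < c) (hz : 0 < z) :
    (∫ r : ℝ, Wf c z r) = ∫ s : ℝ, Fz c z s := by
  have h0 : 0 < Real.sqrt z := Real.sqrt_pos.mpr hz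
  have hsz : Real.sqrt z ^ 2 = z := Real.sq_sqrt hz.le
  have hcomp : ∀ s : ℝ, Fz c z s = Real.sqrt z • Wf c z (Real.sqrt z * s + c) := by
    intro s
    by_cases hm : Real.sqrt z * s + c ∈ Set.Ioi (0:ℝ)
    · simp only [Fz, Wf]
      rw [Set.indicator_of_mem hm, Set.indicator_of_mem hm]
      have h1 : (Real.sqrt z * s + c - c) ^ 2 / z = s ^ 2 := by
        rw [show Real.sqrt z * s + c - c = Real.sqrt z * s by ring, mul_pow, hsz]
        field_simp
      have h2 : (Real.sqrt z * s + c + c) ^ 2 / z = (s + 2 * c / Real.sqrt z) ^ 2 := by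
        rw [show s + 2 * c / Real.sqrt z = (Real.sqrt z * s + 2 * c) / Real.sqrt z by
          field_simp, div_pow, hsz]
        congr 1
        ring
      rw [h1, h2, smul_eq_mul, ← mul_assoc, mul_inv_cancel₀ h0.ne', one_mul]
    · simp only [Fz, Wf]
      rw [Set.indicator_of_notMem hm, Set.indicator_of_notMem hm]
      simp
  have hshift : (∫ x : ℝ, Wf c z (x + c)) = ∫ r : ℝ, Wf c z r :=
    MeasureTheory.integral_add_right_eq_self (Wf c z) c
  have hscale := MeasureTheory.Measure.integral_comp_mul_left
    (fun x => Wf c z (x + c)) (Real.sqrt z)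
  calc (∫ r : ℝ, Wf c z r)
      = Real.sqrt z • ((Real.sqrt z)⁻¹ • ∫ r : ℝ, Wf c z r) := by
        rw [smul_smul, mul_inv_cancel₀ h0.ne', one_smul]
    _ = Real.sqrt z • ∫ s : ℝ, Wf c z (Real.sqrt z * s + c) := by
        rw [show (∫ s : ℝ, Wf c z (Real.sqrt z * s + c))
            = |(Real.sqrt z)⁻¹| • ∫ x : ℝ, Wf c z (x + c) from hscale,
          hshift, abs_of_pos (inv_pos.mpr h0)]
    _ = ∫ s : ℝ, Real.sqrt z • Wf c z (Real.sqrt z * s + c) := by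
        rw [MeasureTheory.integral_smul]
    _ = ∫ s : ℝ, Fz c z s := by
        congr 1
        funext s
        exact (hcomp s).symm

/-- Henkel's conjectured limit:
`lim_{z→0⁺} e^{−ξ²/(2z)} z^{1/2} Ψ₁[1,1/2;3/2,1/2;−z,ξ²/(2z)] = (π/2) erf(ξ/√2)`. -/
theorem henkel_limit (ξ : ℝ) (hξ : 0 < ξ) :
    Tendsto (fun z : ℝ =>
        Complex.exp (-((ξ ^ 2 / (2 * z) : ℝ) : ℂ)) * (Real.sqrt z : ℂ) *
          Psi1 1 (1 / 2) (3 / 2) (1 / 2) (-(z : ℂ)) ((ξ ^ 2 / (2 * z) : ℝ) : ℂ))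
      (nhdsWithin 0 (Set.Ioi 0))
      (nhds ((Real.pi / 2 * erf (ξ / Real.sqrt 2) : ℝ) : ℂ)) := by
  set c : ℝ := ξ / Real.sqrt 2 with hcdef
  have hc : 0 < c := div_pos hξ (Real.sqrt_pos.mpr two_pos)
  have hval : Real.pi / 2 * erf c = Real.sqrt Real.pi * G c := by
    have hG' : erf c = 2 / Real.sqrt Real.pi * G c := rfl
    have hπ : Real.sqrt Real.pi * Real.sqrt Real.pi = Real.pi :=
      Real.mul_self_sqrt Real.pi_pos.le
    have hπ0 : Real.sqrt Real.pi ≠ 0 := by positivity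
    rw [hG']
    field_simp
    linear_combination (-G c) * hπ
  have h2 : Tendsto (fun z : ℝ => ((∫ s : ℝ, Fz c z s : ℝ) : ℂ)) (𝓝[>] (0:ℝ))
      (𝓝 ((Real.sqrt Real.pi * G c : ℝ) : ℂ)) :=
    (Complex.continuous_ofReal.tendsto _).comp (main_tendsto hc)
  rw [show ((Real.pi / 2 * erf c : ℝ) : ℂ) = ((Real.sqrt Real.pi * G c : ℝ) : ℂ) by
    rw [hval]]
  apply h2.congr'
  filter_upwards [self_mem_nhdsWithin] with z hz
  have hz' : (0:ℝ) < z := hz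
  have hy : (0:ℝ) ≤ ξ ^ 2 / (2 * z) := by positivity
  rw [step1 hy hz']
  rw [show (-((ξ ^ 2 / (2 * z) : ℝ) : ℂ)) = ((-(ξ ^ 2 / (2 * z)) : ℝ) : ℂ) by push_cast; ring,
    ← Complex.ofReal_exp]
  rw [show (Complex.ofReal (Real.exp (-(ξ ^ 2 / (2 * z)))) *
        (Real.sqrt z : ℂ) * ((∫ u in Set.Ioi (0:ℝ), phi (ξ ^ 2 / (2 * z)) z u : ℝ) : ℂ))
      = (((Real.exp (-(ξ ^ 2 / (2 * z))) * Real.sqrt z *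
          ∫ u in Set.Ioi (0:ℝ), phi (ξ ^ 2 / (2 * z)) z u : ℝ)) : ℂ) by push_cast; ring]
  rw [step2 hξ hz', step3 hc hz']
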